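/- Let X be an abelian Polish group, let A ⊆ X be a Borel set that is not Haar null in X, and let B ⊆ ℝ be a Borel set of positive Lebesgue measure. Then the set B × A is not Haar null in the abelian Polish group ℝ × X. -/

import Mathlib

open MeasureTheory Set

/-- A set in a topological abelian group is *Haar meager* if there is a Borel set `B ⊇ A`,
a nonempty compact metric space `K` and a continuous `f : K → G` such that `f ⁻¹' (B + x)`
is meager in `K` for every `x ∈ G`. -/
def IsHaarMeager {G : Type*} [TopologicalSpace G] [AddCommGroup G] (A : Set G) : Prop :=
  ∃ B : Set G, A ⊆ B ∧ MeasurableSet[borel G] B ∧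
    ∃ (K : Type) (_ : MetricSpace K) (_ : CompactSpace K) (_ : Nonempty K) (f : K → G),
      Continuous f ∧ ∀ x : G, IsMeagre (f ⁻¹' ((fun b => b + x) '' B))

/-- A set in a topological abelian group is *Haar null* if there is a Borel probability
measure `μ` and a Borel set `B ⊇ A` with `μ (x + B) = 0` for every `x ∈ G`. -/
def IsHaarNull {G : Type*} [TopologicalSpace G] [AddCommGroup G] (A : Set G) : Prop :=
  ∃ μ : @Measure G (borel G), @IsProbabilityMeasure G (borel G) μ ∧
    ∃ B : Set G, A ⊆ B ∧ MeasurableSet[borel G] B ∧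
      ∀ x : G, μ ((fun b => x + b) '' B) = 0

/-- If `A ⊆ X` is a Borel set which is not Haar null and `B ⊆ ℝ` is a Borel set of
positive Lebesgue measure, then `B × A` is not Haar null in `ℝ × X`. -/
theorem not_haarNull_prod {X : Type*}
    [TopologicalSpace X] [AddCommGroup X] [IsTopologicalAddGroup X] [PolishSpace X]
    (A : Set X) (hA : MeasurableSet[borel X] A) (hAn : ¬ IsHaarNull A)
    (B : Set ℝ) (hB : MeasurableSet[borel ℝ] B) (hBpos : 0 < volume B) :
    ¬ IsHaarNull (B ×ˢ A) := by
  letI mX : MeasurableSpace X := borel X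
  haveI : BorelSpace X := ⟨rfl⟩
  intro h
  unfold IsHaarNull at h
  rw [← BorelSpace.measurable_eq (α := ℝ × X)] at h
  obtain ⟨μ, hμprob, C, hCsub, hCmeas, hCnull⟩ := h
  haveI := hμprob
  -- the section-measure function
  set F : X → ENNReal := fun y => volume {s : ℝ | (s, y) ∈ C} with hFdef
  have hF : Measurable F := by
    have := measurable_measure_prodMk_right (μ := (volume : Measure ℝ)) hCmeas
    exact this
  -- key Fubini step
  have key : ∀ x₀ : X, ∀ᵐ q ∂μ, F (q.2 - x₀) = 0 := by
    intro x₀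
    set E : Set (ℝ × (ℝ × X)) := {p | (p.2.1 - p.1, p.2.2 - x₀) ∈ C} with hE
    have hEmeas : MeasurableSet E := by
      have hm : Measurable fun p : ℝ × (ℝ × X) => (p.2.1 - p.1, p.2.2 - x₀) := by
        fun_prop
      exact hm hCmeas
    have hzero : (volume.prod μ) E = 0 := by
      rw [Measure.prod_apply hEmeas]
      have hs : ∀ t₀ : ℝ, μ (Prod.mk t₀ ⁻¹' E) = 0 := by
        intro t₀
        have him : Prod.mk t₀ ⁻¹' E = (fun b => (t₀, x₀) + b) '' C := by
          ext q
          simp only [hE, mem_preimage, mem_setOf_eq, image_add_left, neg_add_eq_sub,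
            Prod.mk.injEq]
          have hqq : q - (t₀, x₀) = (q.1 - t₀, q.2 - x₀) := rfl
          rw [hqq]
        rw [him]; exact hCnull (t₀, x₀)
      simp [hs]
    have hsym : ∫⁻ q, volume ((fun t₀ => (t₀, q)) ⁻¹' E) ∂μ = 0 := by
      rw [← Measure.prod_apply_symm hEmeas]; exact hzero
    have hae : ∀ᵐ q ∂μ, volume ((fun t₀ => (t₀, q)) ⁻¹' E) = 0 := by
      have := (lintegral_eq_zero_iff
        (measurable_measure_prodMk_right (μ := (volume : Measure ℝ)) hEmeas)).mp hsym
      filter_upwards [this] with q hq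
      simpa using hq
    filter_upwards [hae] with q hq
    have hrw : (fun t₀ => (t₀, q)) ⁻¹' E
        = (fun t₀ : ℝ => -t₀) ⁻¹' ((fun t₀ : ℝ => q.1 + t₀) ⁻¹' {s | (s, q.2 - x₀) ∈ C}) := by
      ext t₀
      simp [hE, sub_eq_add_neg, add_comm]
    rw [hrw, Measure.measure_preimage_neg, measure_preimage_add] at hq
    exact hq
  -- build the witness that A is Haar null
  have hA'meas : MeasurableSet {y : X | F y ≠ 0} := by
    have : {y : X | F y ≠ 0} = F ⁻¹' ({0}ᶜ) := rfl
    rw [this]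
    exact hF (measurableSet_singleton 0).compl
  refine hAn ⟨μ.map Prod.snd, ?_, {y | F y ≠ 0}, ?_, hA'meas, ?_⟩
  · exact Measure.isProbabilityMeasure_map measurable_snd.aemeasurable
  · intro y hy
    have hsub : B ⊆ {s : ℝ | (s, y) ∈ C} := fun s hs => hCsub ⟨hs, hy⟩
    have : 0 < F y := lt_of_lt_of_le hBpos (measure_mono hsub)
    exact this.ne'
  · intro x₀
    have him : (fun b => x₀ + b) '' {y | F y ≠ 0} = {y | F (y - x₀) ≠ 0} := by
      ext y
      simp only [image_add_left, mem_preimage, mem_setOf_eq, neg_add_eq_sub]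
    have hmeas2 : MeasurableSet {y : X | F (y - x₀) ≠ 0} := by
      have hm : Measurable fun y : X => F (y - x₀) := hF.comp (measurable_sub_const x₀)
      have : {y : X | F (y - x₀) ≠ 0} = (fun y => F (y - x₀)) ⁻¹' ({0}ᶜ) := rfl
      rw [this]
      exact hm (measurableSet_singleton 0).compl
    rw [him, Measure.map_apply measurable_snd hmeas2]
    have : Prod.snd ⁻¹' {y : X | F (y - x₀) ≠ 0} = {q : ℝ × X | ¬ F (q.2 - x₀) = 0} := rfl
    rw [this, ← ae_iff]
    exact key x₀
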